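/- Let n ≥ 2, let θ : Fin n → ℝ and p : Fin n × Fin n → [0,1]. Under the Bernoulli-Plackett-Luce model, the expectation of the edge indicator a_{ij} (for distinct i, j) equals p_{ij} · exp(θ_i)/(exp(θ_i)+exp(θ_j)). -/

import Mathlib

open Finset

/-- The Plackett-Luce probability of a permutation `π` of `{1,…,n}` with logits `θ`. -/
noncomputable def plackettLuce {n : ℕ} (θ : Fin n → ℝ) (π : Equiv.Perm (Fin n)) : ℝ :=
  ∏ k : Fin n,
    Real.exp (θ (π k)) / ∑ u ∈ Finset.univ.filter (fun u => k ≤ u), Real.exp (θ (π u))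

/-- Joint probability of a `(permutation, edge mask)` sample under the
Bernoulli-Plackett-Luce model: the permutation is Plackett-Luce distributed and,
independently, each mask entry `b i j` is Bernoulli with parameter `p i j`. -/
noncomputable def bplProb {n : ℕ} (θ : Fin n → ℝ) (p : Fin n → Fin n → ℝ)
    (ω : Equiv.Perm (Fin n) × (Fin n → Fin n → Bool)) : ℝ :=
  plackettLuce θ ω.1 * ∏ i : Fin n, ∏ j : Fin n, (if ω.2 i j then p i j else 1 - p i j)

/-- The edge indicator `a_{ij} = b_{ij} · 1[π⁻¹(i) < π⁻¹(j)]`. -/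
def bplEdge {n : ℕ} (i j : Fin n)
    (ω : Equiv.Perm (Fin n) × (Fin n → Fin n → Bool)) : ℝ :=
  if ω.2 i j ∧ ω.1.symm i < ω.1.symm j then 1 else 0

lemma pl_decompose {n : ℕ} (θ : Fin (n+1) → ℝ) (p : Fin (n+1)) (e : Equiv.Perm (Fin n)) :
    plackettLuce θ (Equiv.Perm.decomposeFin.symm (p, e))
      = Real.exp (θ p) / (∑ u, Real.exp (θ u)) *
        plackettLuce (fun m => θ (Equiv.swap 0 p m.succ)) e := by
  unfold plackettLuce
  rw [Fin.prod_univ_succ]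
  congr 1
  · congr 1
    · rw [Equiv.Perm.decomposeFin_symm_apply_zero]
    · rw [Finset.filter_true_of_mem (fun u _ => Fin.zero_le u)]
      exact Equiv.sum_comp _ (fun u => Real.exp (θ u))
  · refine Finset.prod_congr rfl fun x _ => ?_
    congr 1
    · rw [Equiv.Perm.decomposeFin_symm_apply_succ]
    · rw [Finset.sum_filter, Finset.sum_filter, Fin.sum_univ_succ]
      simp only [Fin.succ_le_succ_iff, Equiv.Perm.decomposeFin_symm_apply_succ]
      rw [if_neg (by simp [Fin.le_def, Fin.succ_pos])]
      ring

lemma sum_exp_pos {n : ℕ} (θ : Fin (n+1) → ℝ) : 0 < ∑ u, Real.exp (θ u) :=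
  Finset.sum_pos (fun u _ => Real.exp_pos _) ⟨0, Finset.mem_univ 0⟩

lemma pl_sum {n : ℕ} (θ : Fin n → ℝ) : ∑ π : Equiv.Perm (Fin n), plackettLuce θ π = 1 := by
  induction n with
  | zero =>
    rw [Finset.sum_congr rfl (fun π _ => show plackettLuce θ π = 1 from Finset.prod_of_isEmpty _)]
    simp
  | succ m ih =>
    rw [← Equiv.sum_comp (Equiv.Perm.decomposeFin (n := m)).symm, Fintype.sum_prod_type]
    have : ∀ p : Fin (m+1),
        ∑ e : Equiv.Perm (Fin m), plackettLuce θ (Equiv.Perm.decomposeFin.symm (p, e))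
          = Real.exp (θ p) / (∑ u, Real.exp (θ u)) := by
      intro p
      simp only [pl_decompose, ← Finset.mul_sum, ih]
      ring
    simp only [this]
    rw [← Finset.sum_div, div_self (ne_of_gt (sum_exp_pos θ))]

lemma swap_zero_ne_zero {n : ℕ} {p i : Fin (n+1)} (h : i ≠ p) : Equiv.swap 0 p i ≠ 0 := by
  intro h0
  exact h ((Equiv.swap 0 p).injective (h0.trans (Equiv.swap_apply_right 0 p).symm))

lemma decomp_symm_apply {n : ℕ} (p : Fin (n+1)) (e : Equiv.Perm (Fin n)) (i : Fin (n+1))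
    (h : Equiv.swap 0 p i ≠ 0) :
    (Equiv.Perm.decomposeFin.symm (p, e)).symm i
      = (e.symm ((Equiv.swap 0 p i).pred h)).succ := by
  rw [Equiv.symm_apply_eq, Equiv.Perm.decomposeFin_symm_apply_succ]
  simp [Fin.succ_pred]

lemma decomp_symm_self {n : ℕ} (p : Fin (n+1)) (e : Equiv.Perm (Fin n)) :
    (Equiv.Perm.decomposeFin.symm (p, e)).symm p = 0 := by
  rw [Equiv.symm_apply_eq, Equiv.Perm.decomposeFin_symm_apply_zero]

lemma pl_before {n : ℕ} (θ : Fin n → ℝ) (i j : Fin n) (hij : i ≠ j) :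
    ∑ π : Equiv.Perm (Fin n),
        plackettLuce θ π * (if π.symm i < π.symm j then 1 else 0)
      = Real.exp (θ i) / (Real.exp (θ i) + Real.exp (θ j)) := by
  induction n with
  | zero => exact absurd i.2 (Nat.not_lt_zero _)
  | succ m ih =>
    set T := ∑ u, Real.exp (θ u) with hT
    have hT0 : T ≠ 0 := ne_of_gt (sum_exp_pos θ)
    set r := Real.exp (θ i) / (Real.exp (θ i) + Real.exp (θ j)) with hr
    have hij0 : Real.exp (θ i) + Real.exp (θ j) ≠ 0 :=
      ne_of_gt (by positivity)
    rw [← Equiv.sum_comp (Equiv.Perm.decomposeFin (n := m)).symm, Fintype.sum_prod_type]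
    have key : ∀ p : Fin (m+1),
        (∑ e : Equiv.Perm (Fin m),
          plackettLuce θ (Equiv.Perm.decomposeFin.symm (p, e)) *
            (if (Equiv.Perm.decomposeFin.symm (p, e)).symm i
                < (Equiv.Perm.decomposeFin.symm (p, e)).symm j then 1 else 0))
        = Real.exp (θ p) / T *
            (if p = i then 1 else if p = j then 0 else r) := by
      intro p
      by_cases hpi : p = i
      · subst hpi
        have hjne : j ≠ p := fun h => hij h.symm
        have : ∀ e : Equiv.Perm (Fin m),
            (if (Equiv.Perm.decomposeFin.symm (p, e)).symm p
                < (Equiv.Perm.decomposeFin.symm (p, e)).symm j then (1:ℝ) else 0) = 1 := by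
          intro e
          rw [decomp_symm_self, decomp_symm_apply p e j (swap_zero_ne_zero hjne), if_pos]
          exact Fin.succ_pos _
        simp only [this, mul_one, pl_decompose, ← hT]
        rw [← Finset.mul_sum, pl_sum]
        simp
      · by_cases hpj : p = j
        · subst hpj
          have hine : i ≠ p := hij
          have : ∀ e : Equiv.Perm (Fin m),
              (if (Equiv.Perm.decomposeFin.symm (p, e)).symm i
                  < (Equiv.Perm.decomposeFin.symm (p, e)).symm p then (1:ℝ) else 0) = 0 := by
            intro e
            rw [decomp_symm_self, decomp_symm_apply p e i (swap_zero_ne_zero hine), if_neg]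
            exact fun h => absurd h (Fin.not_lt_zero _).elim
          simp only [this, mul_zero, Finset.sum_const_zero]
          simp [Ne.symm hij]
        · have hine : i ≠ p := fun h => hpi h.symm
          have hjne : j ≠ p := fun h => hpj h.symm
          set i' := (Equiv.swap 0 p i).pred (swap_zero_ne_zero hine) with hi'
          set j' := (Equiv.swap 0 p j).pred (swap_zero_ne_zero hjne) with hj'
          have hij' : i' ≠ j' := by
            intro h
            apply hij
            have := congrArg Fin.succ h
            rw [hi', hj', Fin.succ_pred, Fin.succ_pred] at this
            exact (Equiv.swap 0 p).injective this
          have hval : ∀ e : Equiv.Perm (Fin m),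
              (if (Equiv.Perm.decomposeFin.symm (p, e)).symm i
                  < (Equiv.Perm.decomposeFin.symm (p, e)).symm j then (1:ℝ) else 0)
                = (if e.symm i' < e.symm j' then 1 else 0) := by
            intro e
            rw [decomp_symm_apply p e i (swap_zero_ne_zero hine),
              decomp_symm_apply p e j (swap_zero_ne_zero hjne)]
            simp [Fin.succ_lt_succ_iff]
            rfl
          have hθi : θ (Equiv.swap 0 p i'.succ) = θ i := by
            simp [hi', Fin.succ_pred]
          have hθj : θ (Equiv.swap 0 p j'.succ) = θ j := by
            simp [hj', Fin.succ_pred]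
          simp only [hval, pl_decompose, ← hT, mul_assoc, ← Finset.mul_sum]
          rw [ih _ i' j' hij']
          simp only [hθi, hθj]
          rw [if_neg hpi, if_neg hpj, ← hr]
    simp only [key]
    have expand : ∀ p : Fin (m+1),
        Real.exp (θ p) / T * (if p = i then 1 else if p = j then 0 else r)
          = Real.exp (θ p) / T * r
            + (if p = i then (Real.exp (θ i) - Real.exp (θ i) * r) / T else 0)
            + (if p = j then -(Real.exp (θ j) * r) / T else 0) := by
      intro p
      by_cases hpi : p = i
      · subst hpi
        rw [if_pos rfl, if_pos rfl, if_neg hij]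
        ring
      · by_cases hpj : p = j
        · subst hpj
          rw [if_neg hpi, if_pos rfl, if_neg hpi, if_pos rfl]
          ring
        · rw [if_neg hpi, if_neg hpj, if_neg hpi, if_neg hpj]
          ring
    simp only [expand]
    rw [Finset.sum_add_distrib, Finset.sum_add_distrib, Finset.sum_ite_eq' Finset.univ i,
      Finset.sum_ite_eq' Finset.univ j, if_pos (Finset.mem_univ i), if_pos (Finset.mem_univ j)]
    have : ∑ p : Fin (m+1), Real.exp (θ p) / T * r = r := by
      rw [← Finset.sum_mul, ← Finset.sum_div, ← hT, div_self hT0, one_mul]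
    rw [this, hr]
    field_simp
    ring

lemma sum_fun_prod {α β : Type*} [Fintype α] [DecidableEq α] [Fintype β]
    (G : α → β → ℝ) :
    ∑ g : α → β, ∏ a, G a (g a) = ∏ a, ∑ y, G a y := by
  rw [Finset.prod_univ_sum (fun _ => Finset.univ) G, Fintype.piFinset_univ]

lemma bern_sum {n : ℕ} (p : Fin n → Fin n → ℝ) (i j : Fin n) :
    ∑ b : Fin n → Fin n → Bool,
        (∏ a : Fin n, ∏ c : Fin n, (if b a c then p a c else 1 - p a c))
          * (if b i j then (1:ℝ) else 0)
      = p i j := by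
  have point : ∀ b : Fin n → Fin n → Bool,
      (∏ a : Fin n, ∏ c : Fin n, (if b a c then p a c else 1 - p a c))
          * (if b i j then (1:ℝ) else 0)
        = ∏ a : Fin n, ∏ c : Fin n,
            ((if b a c then p a c else 1 - p a c)
              * (if a = i ∧ c = j then (if b a c then (1:ℝ) else 0) else 1)) := by
    intro b
    rw [Finset.prod_congr rfl (fun a _ => Finset.prod_mul_distrib), Finset.prod_mul_distrib]
    congr 1
    have inner : ∀ a : Fin n,
        (∏ c : Fin n, (if a = i ∧ c = j then (if b a c then (1:ℝ) else 0) else 1))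
          = (if a = i then (if b a j then (1:ℝ) else 0) else 1) := by
      intro a
      by_cases ha : a = i
      · subst ha
        simp only [true_and]
        rw [Finset.prod_ite_eq' Finset.univ j (fun c => if b a c then (1:ℝ) else 0),
          if_pos (Finset.mem_univ j)]
        simp
      · simp [ha]
    rw [Finset.prod_congr rfl (fun a _ => inner a),
      Finset.prod_ite_eq' Finset.univ i (fun a => if b a j then (1:ℝ) else 0),
      if_pos (Finset.mem_univ i)]
  simp only [point]
  refine (sum_fun_prod (fun (a : Fin n) (h : Fin n → Bool) =>
    ∏ c : Fin n, (if h c then p a c else 1 - p a c)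
      * (if a = i ∧ c = j then (if h c then (1:ℝ) else 0) else 1))).trans ?_
  beta_reduce
  have step2 : ∀ a : Fin n,
      (∑ h : Fin n → Bool, ∏ c : Fin n,
        ((if h c then p a c else 1 - p a c)
          * (if a = i ∧ c = j then (if h c then (1:ℝ) else 0) else 1)))
        = ∏ c : Fin n, ∑ t : Bool,
            ((if t then p a c else 1 - p a c)
              * (if a = i ∧ c = j then (if t then (1:ℝ) else 0) else 1)) := by
    intro a
    exact sum_fun_prod (fun (c : Fin n) (t : Bool) =>
      (if t then p a c else 1 - p a c)
        * (if a = i ∧ c = j then (if t then (1:ℝ) else 0) else 1))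
  simp only [step2]
  have step3 : ∀ a c : Fin n,
      (∑ t : Bool, ((if t then p a c else 1 - p a c)
          * (if a = i ∧ c = j then (if t then (1:ℝ) else 0) else 1)))
        = (if a = i ∧ c = j then p a c else 1) := by
    intro a c
    by_cases h : a = i ∧ c = j <;> simp [h, Fintype.sum_bool] <;> ring
  simp only [step3]
  have last : ∀ a : Fin n, (∏ c : Fin n, (if a = i ∧ c = j then p a c else 1))
      = (if a = i then p a j else 1) := by
    intro a
    by_cases ha : a = i
    · subst ha
      simp only [true_and]
      rw [Finset.prod_ite_eq' Finset.univ j (fun c => p a c), if_pos (Finset.mem_univ j)]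
      simp
    · simp [ha]
  rw [Finset.prod_congr rfl (fun a _ => last a),
    Finset.prod_ite_eq' Finset.univ i (fun a => p a j), if_pos (Finset.mem_univ i)]

/-- Under the Bernoulli-Plackett-Luce model, the expectation of the edge
indicator `a_{ij}` (for distinct `i j`) equals
`p i j · exp θ i / (exp θ i + exp θ j)`. -/
theorem bpl_expected_edge {n : ℕ} (hn : 2 ≤ n) (θ : Fin n → ℝ)
    (p : Fin n → Fin n → ℝ) (hp : ∀ a b, 0 ≤ p a b ∧ p a b ≤ 1)
    (i j : Fin n) (hij : i ≠ j) :
    ∑ ω : Equiv.Perm (Fin n) × (Fin n → Fin n → Bool),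
        bplProb θ p ω * bplEdge i j ω
      = p i j * (Real.exp (θ i) / (Real.exp (θ i) + Real.exp (θ j))) := by
  rw [Fintype.sum_prod_type]
  have point : ∀ (π : Equiv.Perm (Fin n)) (b : Fin n → Fin n → Bool),
      bplProb θ p (π, b) * bplEdge i j (π, b)
        = (plackettLuce θ π * (if π.symm i < π.symm j then (1:ℝ) else 0))
          * ((∏ a : Fin n, ∏ c : Fin n, (if b a c then p a c else 1 - p a c))
              * (if b i j then (1:ℝ) else 0)) := by
    intro π b
    unfold bplProb bplEdge
    by_cases h1 : b i j = true <;> by_cases h2 : π.symm i < π.symm j <;>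
      simp [h1, h2] <;> ring
  simp only [point]
  have inner : ∀ π : Equiv.Perm (Fin n),
      ∑ b : Fin n → Fin n → Bool,
        (plackettLuce θ π * (if π.symm i < π.symm j then (1:ℝ) else 0))
          * ((∏ a : Fin n, ∏ c : Fin n, (if b a c then p a c else 1 - p a c))
              * (if b i j then (1:ℝ) else 0))
        = (plackettLuce θ π * (if π.symm i < π.symm j then (1:ℝ) else 0)) * p i j := by
    intro π
    rw [← Finset.mul_sum, bern_sum]
  simp only [inner]
  rw [← Finset.sum_mul, pl_before θ i j hij]
  ring
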